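/- Let φ be a Bernstein function such that λ ↦ λ/φ(λ) is also a Bernstein function (i.e. φ is a special Bernstein function). Then the functions λ ↦ λ²·φ'(λ) and λ ↦ λ²·φ'(λ)/φ(λ)² are nondecreasing on (0,∞). -/

import Mathlib

open MeasureTheory Set

section BernsteinAux

lemma aux_ue {u : ℝ} (hu : 0 ≤ u) : u * Real.exp (-u) ≤ 1 := by
  have h1 := Real.add_one_le_exp u
  have h2 := Real.exp_pos u
  rw [Real.exp_neg, mul_inv_le_iff₀ h2, one_mul]
  linarith

lemma aux_H_mono {u v : ℝ} (hu : 0 ≤ u) (huv : u ≤ v) :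
    1 - Real.exp (-u) - u * Real.exp (-u) ≤ 1 - Real.exp (-v) - v * Real.exp (-v) := by
  have h1 := Real.add_one_le_exp (v - u)
  have h2 := Real.exp_pos (-v)
  have h5 : (1+v) ≤ (1+u) * Real.exp (v-u) := by nlinarith
  have h6 : (1+v) * Real.exp (-v) ≤ (1+u) * Real.exp (-u) := by
    calc (1+v) * Real.exp (-v) ≤ ((1+u) * Real.exp (v-u)) * Real.exp (-v) :=
          mul_le_mul_of_nonneg_right h5 h2.le
      _ = (1+u) * Real.exp (-u) := by
          rw [mul_assoc, ← Real.exp_add, show v - u + -v = -u by ring]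
  nlinarith [h6]

lemma aux_H_nonneg {u : ℝ} (hu : 0 ≤ u) :
    0 ≤ 1 - Real.exp (-u) - u * Real.exp (-u) := by
  have := aux_H_mono le_rfl hu
  simp at this
  linarith

lemma aux_one_sub_exp_le {u : ℝ} (hu : 0 ≤ u) : 1 - Real.exp (-u) ≤ min 1 u := by
  have h1 := Real.exp_pos (-u)
  have h2 := Real.add_one_le_exp (-u)
  exact le_min (by linarith) (by linarith)

lemma min_integrable (μ : Measure ℝ)
    (hμ : (∫⁻ x in Ioi (0:ℝ), ENNReal.ofReal (min 1 x) ∂μ) < ⊤) :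
    Integrable (fun x => min 1 x) (μ.restrict (Ioi 0)) := by
  refine ⟨(continuous_const.min continuous_id).aestronglyMeasurable, ?_⟩
  rw [hasFiniteIntegral_iff_ofReal ?_]
  · exact hμ
  · refine (ae_restrict_iff' measurableSet_Ioi).2 (ae_of_all _ fun x hx => ?_)
    exact le_min one_pos.le (le_of_lt hx)

lemma integrable_of_dom (μ : Measure ℝ)
    (hμ : (∫⁻ x in Ioi (0:ℝ), ENNReal.ofReal (min 1 x) ∂μ) < ⊤)
    {f : ℝ → ℝ} (hf : Continuous f) {C : ℝ}
    (hle : ∀ x ∈ Ioi (0:ℝ), ‖f x‖ ≤ C * min 1 x) :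
    Integrable f (μ.restrict (Ioi 0)) := by
  refine Integrable.mono ((min_integrable μ hμ).const_mul C) hf.aestronglyMeasurable ?_
  refine (ae_restrict_iff' measurableSet_Ioi).2 (ae_of_all _ fun x hx => ?_)
  exact (hle x hx).trans (le_abs_self _)

lemma int_F (μ : Measure ℝ)
    (hμ : (∫⁻ x in Ioi (0:ℝ), ENNReal.ofReal (min 1 x) ∂μ) < ⊤)
    {l : ℝ} (hl : 0 < l) :
    Integrable (fun x => 1 - Real.exp (-(l * x))) (μ.restrict (Ioi 0)) := by
  refine integrable_of_dom μ hμ (by continuity) (C := max 1 l) (fun x hx => ?_)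
  have hx' : (0:ℝ) < x := hx
  have h0 : 0 ≤ 1 - Real.exp (-(l*x)) := by
    have := Real.exp_le_one_iff.2 (by nlinarith : -(l*x) ≤ 0)
    linarith
  rw [Real.norm_eq_abs, abs_of_nonneg h0]
  have h1 : 1 - Real.exp (-(l*x)) ≤ min 1 (l*x) := aux_one_sub_exp_le (by positivity)
  refine h1.trans ?_
  rcases le_total x 1 with h | h
  · have hmx : min 1 x = x := min_eq_right h
    rw [hmx]
    calc min 1 (l*x) ≤ l * x := min_le_right _ _
      _ ≤ max 1 l * x := by nlinarith [le_max_right 1 l]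
  · have hmx : min 1 x = 1 := min_eq_left h
    rw [hmx, mul_one]
    exact (min_le_left _ _).trans (le_max_left 1 l)

lemma int_F' (μ : Measure ℝ)
    (hμ : (∫⁻ x in Ioi (0:ℝ), ENNReal.ofReal (min 1 x) ∂μ) < ⊤)
    {l : ℝ} (hl : 0 < l) :
    Integrable (fun x => x * Real.exp (-(l * x))) (μ.restrict (Ioi 0)) := by
  refine integrable_of_dom μ hμ (by continuity) (C := max 1 (1/l)) (fun x hx => ?_)
  have hx' : (0:ℝ) < x := hx
  have he := Real.exp_pos (-(l*x))
  rw [Real.norm_eq_abs, abs_of_nonneg (by positivity)]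
  rcases le_total x 1 with h | h
  · rw [min_eq_right h]
    have : Real.exp (-(l*x)) ≤ 1 := Real.exp_le_one_iff.2 (by nlinarith)
    nlinarith [le_max_left 1 (1/l)]
  · rw [min_eq_left h, mul_one]
    have key : (l*x) * Real.exp (-(l*x)) ≤ 1 := aux_ue (by positivity)
    have : x * Real.exp (-(l*x)) ≤ 1/l := by
      rw [le_div_iff₀ hl]; nlinarith
    exact this.trans (le_max_right 1 (1/l))

lemma deriv_bound {l : ℝ} (hl : 0 < l) {l' : ℝ} (hl' : l/2 ≤ l') {x : ℝ} (hx : 0 < x) :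
    x * Real.exp (-(l' * x)) ≤ max 1 (2/l) * min 1 x := by
  have hl2 : 0 < l/2 := by positivity
  have hmono : Real.exp (-(l' * x)) ≤ Real.exp (-((l/2) * x)) := by
    apply Real.exp_le_exp.2; nlinarith
  have he := Real.exp_pos (-((l/2)*x))
  rcases le_total x 1 with h | h
  · rw [min_eq_right h]
    have h1 : Real.exp (-((l/2)*x)) ≤ 1 := Real.exp_le_one_iff.2 (by nlinarith)
    nlinarith [le_max_left 1 (2/l)]
  · rw [min_eq_left h, mul_one]
    have key : ((l/2)*x) * Real.exp (-((l/2)*x)) ≤ 1 := aux_ue (by positivity)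
    have h2 : x * Real.exp (-((l/2)*x)) ≤ 2/l := by
      rw [le_div_iff₀ hl]; nlinarith
    have : x * Real.exp (-(l'*x)) ≤ x * Real.exp (-((l/2)*x)) := by nlinarith
    exact this.trans (h2.trans (le_max_right 1 (2/l)))

lemma bern_hasDerivAt (b : ℝ) (μ : Measure ℝ)
    (hμ : (∫⁻ x in Ioi (0:ℝ), ENNReal.ofReal (min 1 x) ∂μ) < ⊤)
    {l : ℝ} (hl : 0 < l) :
    HasDerivAt (fun t => b * t + ∫ x in Ioi (0:ℝ), (1 - Real.exp (-(t * x))) ∂μ)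
      (b + ∫ x in Ioi (0:ℝ), x * Real.exp (-(l * x)) ∂μ) l := by
  have h1 : HasDerivAt (fun t : ℝ => b * t) b l := by
    simpa using (hasDerivAt_id l).const_mul b
  have h2 := hasDerivAt_integral_of_dominated_loc_of_deriv_le
    (F := fun (t : ℝ) (x : ℝ) => 1 - Real.exp (-(t * x)))
    (F' := fun (t : ℝ) (x : ℝ) => x * Real.exp (-(t * x)))
    (bound := fun x => max 1 (2/l) * min 1 x)
    (μ := μ.restrict (Ioi 0)) (x₀ := l)
    (Metric.ball_mem_nhds l (half_pos hl))
    (Filter.Eventually.of_forall fun t => (Continuous.aestronglyMeasurable (by continuity)))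
    (int_F μ hμ hl)
    (Continuous.aestronglyMeasurable (by continuity))
    ?_ ((min_integrable μ hμ).const_mul _) ?_
  · exact h1.add h2.2
  · refine (ae_restrict_iff' measurableSet_Ioi).2 (ae_of_all _ fun x hx t ht => ?_)
    have hx' : (0:ℝ) < x := hx
    have ht' : l/2 ≤ t := by
      have := abs_lt.1 (mem_ball_iff_norm.1 ht)
      linarith [this.1]
    rw [Real.norm_eq_abs, abs_of_nonneg (by positivity)]
    exact deriv_bound hl ht' hx'
  · refine ae_of_all _ fun x t ht => ?_
    have : HasDerivAt (fun t : ℝ => -(t * x)) (-x) t := by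
      have h := ((hasDerivAt_id t).mul_const x).neg
      simp only [id, one_mul] at h
      exact h
    have hexp := this.exp
    simpa [mul_comm] using hexp.const_sub 1

lemma bern_J_eq (b : ℝ) (μ : Measure ℝ)
    (hμ : (∫⁻ x in Ioi (0:ℝ), ENNReal.ofReal (min 1 x) ∂μ) < ⊤)
    {l : ℝ} (hl : 0 < l) :
    (b * l + ∫ x in Ioi (0:ℝ), (1 - Real.exp (-(l * x))) ∂μ)
      - l * (b + ∫ x in Ioi (0:ℝ), x * Real.exp (-(l * x)) ∂μ)
    = ∫ x in Ioi (0:ℝ), (1 - Real.exp (-(l * x)) - l * (x * Real.exp (-(l * x)))) ∂μ := by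
  rw [integral_sub (int_F μ hμ hl) ((int_F' μ hμ hl).const_mul l), integral_const_mul]
  ring

lemma bern_J_mono (μ : Measure ℝ)
    (hμ : (∫⁻ x in Ioi (0:ℝ), ENNReal.ofReal (min 1 x) ∂μ) < ⊤)
    {a c : ℝ} (ha : 0 < a) (hac : a ≤ c) :
    (∫ x in Ioi (0:ℝ), (1 - Real.exp (-(a * x)) - a * (x * Real.exp (-(a * x)))) ∂μ)
    ≤ ∫ x in Ioi (0:ℝ), (1 - Real.exp (-(c * x)) - c * (x * Real.exp (-(c * x)))) ∂μ := by
  have hc : 0 < c := lt_of_lt_of_le ha hac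
  refine integral_mono_ae ((int_F μ hμ ha).sub ((int_F' μ hμ ha).const_mul a))
    ((int_F μ hμ hc).sub ((int_F' μ hμ hc).const_mul c)) ?_
  refine (ae_restrict_iff' measurableSet_Ioi).2 (ae_of_all _ fun x hx => ?_)
  have hx' : (0:ℝ) < x := hx
  have h := aux_H_mono (mul_nonneg ha.le hx'.le) (by nlinarith : a * x ≤ c * x)
  simp only [Pi.sub_apply]
  nlinarith [h]

lemma bern_J_nonneg (μ : Measure ℝ) {l : ℝ} (hl : 0 < l) :
    0 ≤ ∫ x in Ioi (0:ℝ), (1 - Real.exp (-(l * x)) - l * (x * Real.exp (-(l * x)))) ∂μ := by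
  refine setIntegral_nonneg measurableSet_Ioi fun x hx => ?_
  have hx' : (0:ℝ) < x := hx
  nlinarith [aux_H_nonneg (mul_nonneg hl.le hx'.le)]

lemma bern_mono (b : ℝ) (μ : Measure ℝ) (hb : 0 ≤ b)
    (hμ : (∫⁻ x in Ioi (0:ℝ), ENNReal.ofReal (min 1 x) ∂μ) < ⊤)
    {a c : ℝ} (ha : 0 < a) (hac : a ≤ c) :
    (b * a + ∫ x in Ioi (0:ℝ), (1 - Real.exp (-(a * x))) ∂μ)
    ≤ b * c + ∫ x in Ioi (0:ℝ), (1 - Real.exp (-(c * x))) ∂μ := by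
  have hc : 0 < c := lt_of_lt_of_le ha hac
  refine add_le_add (by nlinarith) ?_
  refine integral_mono_ae (int_F μ hμ ha) (int_F μ hμ hc) ?_
  refine (ae_restrict_iff' measurableSet_Ioi).2 (ae_of_all _ fun x hx => ?_)
  have hx' : (0:ℝ) < x := hx
  have : Real.exp (-(c*x)) ≤ Real.exp (-(a*x)) := Real.exp_le_exp.2 (by nlinarith)
  simp only
  linarith

end BernsteinAux

/-- A Bernstein function: a positive function on `(0,∞)` of the form
`φ(λ) = bλ + ∫_{(0,∞)} (1 - e^{-λx}) μ(dx)` with `b ≥ 0` and `∫ (1 ∧ x) μ(dx) < ∞`. -/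
def IsBernstein (φ : ℝ → ℝ) : Prop :=
  (∀ l, 0 < l → 0 < φ l) ∧
  ∃ (b : ℝ) (μ : Measure ℝ), 0 ≤ b ∧
    (∫⁻ x in Ioi (0:ℝ), ENNReal.ofReal (min 1 x) ∂μ) < ⊤ ∧
    ∀ l, 0 < l → φ l = b * l + ∫ x in Ioi (0:ℝ), (1 - Real.exp (-(l * x))) ∂μ

theorem stmt1 (φ : ℝ → ℝ) (hφ : IsBernstein φ)
    (hspec : IsBernstein (fun l => l / φ l)) :
    MonotoneOn (fun l => l ^ 2 * deriv φ l) (Ioi (0:ℝ)) ∧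
    MonotoneOn (fun l => l ^ 2 * deriv φ l / (φ l) ^ 2) (Ioi (0:ℝ)) := by
  obtain ⟨hφpos, b, μ, hb, hμ, hrep⟩ := hφ
  obtain ⟨hψpos, b', μ', hb', hμ', hrep'⟩ := hspec
  set Dφ : ℝ → ℝ := fun l => b + ∫ x in Ioi (0:ℝ), x * Real.exp (-(l * x)) ∂μ with hDφdef
  set Dψ : ℝ → ℝ := fun l => b' + ∫ x in Ioi (0:ℝ), x * Real.exp (-(l * x)) ∂μ' with hDψdef
  have hDφ : ∀ l, 0 < l → HasDerivAt φ (Dφ l) l := by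
    intro l hl
    refine (bern_hasDerivAt b μ hμ hl).congr_of_eventuallyEq ?_
    filter_upwards [Ioi_mem_nhds hl] with t ht
    exact hrep t ht
  have hDψ : ∀ l, 0 < l → HasDerivAt (fun t => t / φ t) (Dψ l) l := by
    intro l hl
    refine (bern_hasDerivAt b' μ' hμ' hl).congr_of_eventuallyEq ?_
    filter_upwards [Ioi_mem_nhds hl] with t ht
    exact hrep' t ht
  have key : ∀ l, 0 < l → l ^ 2 * Dφ l = (φ l) ^ 2 * ((l / φ l) - l * Dψ l) := by
    intro l hl
    have hφl : φ l ≠ 0 := ne_of_gt (hφpos l hl)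
    have e1 : φ l * (l / φ l) = l := by field_simp
    have hprod : HasDerivAt (fun t => φ t * (t / φ t)) (Dφ l * (l / φ l) + φ l * Dψ l) l :=
      (hDφ l hl).mul (hDψ l hl)
    have hid : HasDerivAt (fun t => φ t * (t / φ t)) 1 l := by
      refine (hasDerivAt_id l).congr_of_eventuallyEq ?_
      filter_upwards [Ioi_mem_nhds hl] with t ht
      field_simp [ne_of_gt (hφpos t ht)]
      rfl
    have e2 : Dφ l * (l / φ l) + φ l * Dψ l = 1 := hprod.unique hid
    linear_combination (-(Dφ l * (l + φ l * (l / φ l)) + (φ l)^2 * Dψ l)) * e1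
      + ((φ l)^2 * (l / φ l)) * e2
  have hM : ∀ l, 0 < l → (l / φ l) - l * Dψ l
      = ∫ x in Ioi (0:ℝ), (1 - Real.exp (-(l * x)) - l * (x * Real.exp (-(l * x)))) ∂μ' := by
    intro l hl
    have h := hrep' l hl
    simp only at h
    rw [h]
    exact bern_J_eq b' μ' hμ' hl
  have hMmono : ∀ a c, 0 < a → a ≤ c → (a / φ a) - a * Dψ a ≤ (c / φ c) - c * Dψ c := by
    intro a c ha hac
    rw [hM a ha, hM c (lt_of_lt_of_le ha hac)]
    exact bern_J_mono μ' hμ' ha hac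
  have hMnonneg : ∀ l, 0 < l → 0 ≤ (l / φ l) - l * Dψ l := by
    intro l hl
    rw [hM l hl]
    exact bern_J_nonneg μ' hl
  have hφmono : ∀ a c, 0 < a → a ≤ c → φ a ≤ φ c := by
    intro a c ha hac
    rw [hrep a ha, hrep c (lt_of_lt_of_le ha hac)]
    exact bern_mono b μ hb hμ ha hac
  constructor
  · intro a ha c hc hac
    have ha' : (0:ℝ) < a := ha
    have hc' : (0:ℝ) < c := hc
    simp only
    rw [(hDφ a ha').deriv, (hDφ c hc').deriv, key a ha', key c hc']
    exact mul_le_mul (pow_le_pow_left₀ (hφpos a ha').le (hφmono a c ha' hac) 2)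
      (hMmono a c ha' hac) (hMnonneg a ha') (by positivity)
  · intro a ha c hc hac
    have ha' : (0:ℝ) < a := ha
    have hc' : (0:ℝ) < c := hc
    simp only
    rw [(hDφ a ha').deriv, (hDφ c hc').deriv, key a ha', key c hc',
      mul_div_cancel_left₀ _ (pow_ne_zero 2 (ne_of_gt (hφpos a ha'))),
      mul_div_cancel_left₀ _ (pow_ne_zero 2 (ne_of_gt (hφpos c hc')))]
    exact hMmono a c ha' hac
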